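/- arXiv:2110.14514 — 4 statements merged into one kernel-verified Lean document; each statement's English description precedes it below -/
import Mathlib

section
/- Let d, R be positive integers, I : Fin d → ℕ, weights λ : Fin R → ℝ, factor matrices A : (k : Fin d) → Fin (I k) → Fin R → ℝ, a data tensor x : (Π_k Fin (I k)) → ℝ, and a loss function f : ℝ → ℝ → ℝ such that for every x₀ the map m ↦ f(x₀, m) is differentiable on ℝ with derivative ∂f/∂m. Fix a mode k₀, a row p ∈ Fin (I k₀), and a column j₀ ∈ Fin R. Then the map ℝ → ℝ sending a to F(a) = Σ_{i ∈ Π_k Fin (I k)} f(x_i, m_i(a)), where m_i(a) is the Kruskal model entry computed with the (p, j₀) entry of the k₀-th factor matrix replaced by a, is differentiable at a = A^{(k₀)}(p, j₀) with derivative Σ_{i : i_{k₀} = p} (∂f/∂m)(x_i, m_i) · λ_{j₀} · Π_{l ≠ k₀} A^{(l)}(i_l, j₀), where m_i is the unmodified Kruskal model entry. -/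
open Finset

/-- Gradient of the GCP objective `F(a) = ∑_i f(x_i, m_i(a))` with respect to a
single entry `A k₀ p j₀` of a factor matrix: it is differentiable at the current
value with derivative `∑_{i : i k₀ = p} f'(x_i, m_i) * λ j₀ * ∏_{l ≠ k₀} A l (i l) j₀`. -/
theorem gcp_objective_hasDerivAt_factor_entry
    (d R : ℕ) (hd : 0 < d) (hR : 0 < R) (I : Fin d → ℕ)
    (lam : Fin R → ℝ) (A : (k : Fin d) → Fin (I k) → Fin R → ℝ)
    (x : ((k : Fin d) → Fin (I k)) → ℝ)
    (f f' : ℝ → ℝ → ℝ)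
    (hf : ∀ x₀ m : ℝ, HasDerivAt (fun m' => f x₀ m') (f' x₀ m) m)
    (k₀ : Fin d) (p : Fin (I k₀)) (j₀ : Fin R) :
    HasDerivAt
      (fun a : ℝ => ∑ i : (k : Fin d) → Fin (I k),
        f (x i) (∑ j : Fin R, lam j *
          ∏ k : Fin d,
            Function.update A k₀
              (Function.update (A k₀) p (Function.update (A k₀ p) j₀ a)) k (i k) j))
      (∑ i ∈ Finset.univ.filter (fun i : (k : Fin d) → Fin (I k) => i k₀ = p),
        f' (x i) (∑ j : Fin R, lam j * ∏ k : Fin d, A k (i k) j) *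
          (lam j₀ * ∏ l ∈ Finset.univ.erase k₀, A l (i l) j₀))
      (A k₀ p j₀) := by
  set a₀ := A k₀ p j₀ with ha₀
  -- rewrite the product split
  have hsplit : ∀ (a : ℝ) (i : (k : Fin d) → Fin (I k)) (j : Fin R),
      (∏ k : Fin d, Function.update A k₀
          (Function.update (A k₀) p (Function.update (A k₀ p) j₀ a)) k (i k) j)
        = (Function.update (A k₀) p (Function.update (A k₀ p) j₀ a) (i k₀) j) *
            ∏ l ∈ Finset.univ.erase k₀, A l (i l) j := by
    intro a i j
    rw [← Finset.mul_prod_erase univ _ (mem_univ k₀)]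
    congr 1
    · simp
    · refine Finset.prod_congr rfl fun l hl => ?_
      rw [Function.update_of_ne (Finset.ne_of_mem_erase hl)]
  have key : ∀ i : (k : Fin d) → Fin (I k),
      HasDerivAt (fun a : ℝ => ∑ j : Fin R, lam j *
          ∏ k : Fin d, Function.update A k₀
            (Function.update (A k₀) p (Function.update (A k₀ p) j₀ a)) k (i k) j)
        ((if i k₀ = p then 1 else 0) *
          (lam j₀ * ∏ l ∈ Finset.univ.erase k₀, A l (i l) j₀)) a₀ := by
    intro i
    simp_rw [hsplit]
    by_cases h : i k₀ = p
    · rw [if_pos h, one_mul]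
      simp_rw [h, Function.update_self]
      have : (lam j₀ * ∏ l ∈ Finset.univ.erase k₀, A l (i l) j₀) =
          ∑ j : Fin R, if j = j₀ then lam j * ∏ l ∈ Finset.univ.erase k₀, A l (i l) j else 0 := by
        rw [Finset.sum_ite_eq' univ j₀]
        simp
      rw [this]
      apply HasDerivAt.fun_sum
      intro j _
      by_cases hj : j = j₀
      · subst hj
        rw [if_pos rfl]
        simp_rw [Function.update_self]
        have := (hasDerivAt_id a₀).mul_const (∏ l ∈ Finset.univ.erase k₀, A l (i l) j)
        have := this.const_mul (lam j)
        simpa [mul_comm, mul_assoc, mul_left_comm] using this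
      · rw [if_neg hj]
        simp_rw [Function.update_of_ne hj]
        exact hasDerivAt_const _ _
    · rw [if_neg h, zero_mul]
      simp_rw [Function.update_of_ne h]
      exact hasDerivAt_const _ _
  have hva : ∀ i : (k : Fin d) → Fin (I k),
      (∑ j : Fin R, lam j *
          ∏ k : Fin d, Function.update A k₀
            (Function.update (A k₀) p (Function.update (A k₀ p) j₀ a₀)) k (i k) j)
        = ∑ j : Fin R, lam j * ∏ k : Fin d, A k (i k) j := by
    intro i
    simp [ha₀, Function.update_eq_self]
  have main : HasDerivAt
      (fun a : ℝ => ∑ i : (k : Fin d) → Fin (I k),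
        f (x i) (∑ j : Fin R, lam j *
          ∏ k : Fin d, Function.update A k₀
            (Function.update (A k₀) p (Function.update (A k₀ p) j₀ a)) k (i k) j))
      (∑ i : (k : Fin d) → Fin (I k),
        f' (x i) (∑ j : Fin R, lam j * ∏ k : Fin d, A k (i k) j) *
          ((if i k₀ = p then 1 else 0) *
            (lam j₀ * ∏ l ∈ Finset.univ.erase k₀, A l (i l) j₀))) a₀ := by
    apply HasDerivAt.fun_sum
    intro i _
    have hc := (hf (x i) (∑ j : Fin R, lam j *
        ∏ k : Fin d, Function.update A k₀
          (Function.update (A k₀) p (Function.update (A k₀ p) j₀ a₀)) k (i k) j)).comp a₀ (key i)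
    rw [hva i] at hc
    exact hc
  convert main using 1
  rw [Finset.sum_filter]
  refine Finset.sum_congr rfl fun i _ => ?_
  by_cases h : i k₀ = p <;> simp [h]
end

section
/- Let d, R be positive integers, I : Fin d → ℕ, factor matrices A : (k : Fin d) → Fin (I k) → Fin R → ℝ, temporal weights s : Fin R → ℝ, a data tensor x : (Π_k Fin (I k)) → ℝ, a regularization parameter μ ∈ ℝ, and a loss function f : ℝ → ℝ → ℝ such that for every x₀ the map m ↦ f(x₀, m) is differentiable on ℝ with derivative ∂f/∂m. Fix j₀ ∈ Fin R. Then the map ℝ → ℝ sending a to F(a) = Σ_{i ∈ Π_k Fin (I k)} f(x_i, m_i(a)) + (μ/2) · Σ_{j ∈ Fin R} (s_j(a))², where s(a) is s with its j₀-th entry replaced by a and m_i(a) is the Kruskal model entry with weights s(a), is differentiable at a = s_{j₀} with derivative Σ_{i ∈ Π_k Fin (I k)} (∂f/∂m)(x_i, m_i) · Π_{k ∈ Fin d} A^{(k)}(i_k, j₀) + μ · s_{j₀}, where m_i is the Kruskal model entry with weights s. -/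
open Finset

lemma update_sum_eq (R : ℕ) (s : Fin R → ℝ) (j₀ : Fin R) (c : Fin R → ℝ) (a : ℝ) :
    ∑ j : Fin R, Function.update s j₀ a j * c j
      = a * c j₀ + ∑ j ∈ Finset.univ.erase j₀, s j * c j := by
  rw [← Finset.add_sum_erase _ _ (Finset.mem_univ j₀)]
  simp only [Function.update_self]
  congr 1
  exact Finset.sum_congr rfl fun j hj => by
    rw [Function.update_of_ne (Finset.ne_of_mem_erase hj)]

lemma hasDerivAt_update_sum (R : ℕ) (s : Fin R → ℝ) (j₀ : Fin R) (c : Fin R → ℝ) (a₀ : ℝ) :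
    HasDerivAt (fun a : ℝ => ∑ j : Fin R, Function.update s j₀ a j * c j) (c j₀) a₀ := by
  have h : (fun a : ℝ => ∑ j : Fin R, Function.update s j₀ a j * c j)
      = fun a : ℝ => a * c j₀ + ∑ j ∈ Finset.univ.erase j₀, s j * c j := by
    funext a; exact update_sum_eq R s j₀ c a
  rw [h]
  simpa using ((hasDerivAt_id a₀).mul_const (c j₀)).add_const (∑ j ∈ Finset.univ.erase j₀, s j * c j)

/-- Gradient of the streaming GCP temporal-weights objective
`F(a) = ∑_i f(x_i, m_i(a)) + (μ/2) ∑_j s_j(a)²`, where `s(a)` is `s` with its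
`j₀`-th entry replaced by `a`: it is differentiable at `s j₀` with derivative
`∑_i f'(x_i, m_i) * ∏_k A k (i k) j₀ + μ * s j₀`. -/
theorem streaming_gcp_temporal_hasDerivAt_weight
    (d R : ℕ) (hd : 0 < d) (hR : 0 < R) (I : Fin d → ℕ)
    (A : (k : Fin d) → Fin (I k) → Fin R → ℝ) (s : Fin R → ℝ)
    (x : ((k : Fin d) → Fin (I k)) → ℝ) (μ : ℝ)
    (f f' : ℝ → ℝ → ℝ)
    (hf : ∀ x₀ m : ℝ, HasDerivAt (fun m' => f x₀ m') (f' x₀ m) m)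
    (j₀ : Fin R) :
    HasDerivAt
      (fun a : ℝ =>
        (∑ i : (k : Fin d) → Fin (I k),
          f (x i) (∑ j : Fin R, Function.update s j₀ a j * ∏ k : Fin d, A k (i k) j))
        + μ / 2 * ∑ j : Fin R, (Function.update s j₀ a j) ^ 2)
      ((∑ i : (k : Fin d) → Fin (I k),
        f' (x i) (∑ j : Fin R, s j * ∏ k : Fin d, A k (i k) j) *
          ∏ k : Fin d, A k (i k) j₀)
        + μ * s j₀)
      (s j₀) := by
  have h1 : HasDerivAt
      (fun a : ℝ => ∑ i : (k : Fin d) → Fin (I k),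
        f (x i) (∑ j : Fin R, Function.update s j₀ a j * ∏ k : Fin d, A k (i k) j))
      (∑ i : (k : Fin d) → Fin (I k),
        f' (x i) (∑ j : Fin R, s j * ∏ k : Fin d, A k (i k) j) *
          ∏ k : Fin d, A k (i k) j₀) (s j₀) := by
    apply HasDerivAt.fun_sum
    intro i _
    have hm := hasDerivAt_update_sum R s j₀ (fun j => ∏ k : Fin d, A k (i k) j) (s j₀)
    have hmval : (∑ j : Fin R, Function.update s j₀ (s j₀) j * ∏ k : Fin d, A k (i k) j)
        = ∑ j : Fin R, s j * ∏ k : Fin d, A k (i k) j := by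
      rw [Function.update_eq_self]
    have := (hf (x i) (∑ j : Fin R, Function.update s j₀ (s j₀) j *
        ∏ k : Fin d, A k (i k) j)).comp (s j₀) hm
    rw [hmval] at this
    exact this
  have h2 : HasDerivAt
      (fun a : ℝ => μ / 2 * ∑ j : Fin R, (Function.update s j₀ a j) ^ 2)
      (μ * s j₀) (s j₀) := by
    have hsq : HasDerivAt (fun a : ℝ => ∑ j : Fin R, (Function.update s j₀ a j) ^ 2)
        (2 * s j₀) (s j₀) := by
      have h : (fun a : ℝ => ∑ j : Fin R, (Function.update s j₀ a j) ^ 2)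
          = fun a : ℝ => a ^ 2 + ∑ j ∈ Finset.univ.erase j₀, (s j) ^ 2 := by
        funext a
        rw [← Finset.add_sum_erase _ _ (Finset.mem_univ j₀)]
        simp only [Function.update_self]
        congr 1
        exact Finset.sum_congr rfl fun j hj => by
          rw [Function.update_of_ne (Finset.ne_of_mem_erase hj)]
      rw [h]
      simpa using ((hasDerivAt_pow 2 (s j₀)).add_const (∑ j ∈ Finset.univ.erase j₀, (s j) ^ 2))
    have := hsq.const_mul (μ / 2)
    exact this.congr_deriv (by ring)
  exact h1.add h2
end

section
/- Let d, R be positive integers, I : Fin d → ℕ, a shared weight vector s : Fin R → ℝ, and two families of factor matrices A, A' : (k : Fin d) → Fin (I k) → Fin R → ℝ, where A' is held fixed (the 'old' factors). Fix a mode k₀, row p ∈ Fin (I k₀), and column j₀ ∈ Fin R. Then the map ℝ → ℝ sending a to (1/2) · Σ_{i ∈ Π_k Fin (I k)} (m'_i − m_i(a))², where m' is the Kruskal model from (s, A') and m(a) is the Kruskal model from (s, A) with the (p, j₀) entry of A^{(k₀)} replaced by a, is differentiable at a = A^{(k₀)}(p, j₀) with derivative Σ_{j' ∈ Fin R} s_{j₀}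 s_{j'} [ A^{(k₀)}(p, j') · Π_{l ≠ k₀} (Σ_r A^{(l)}(r, j')·A^{(l)}(r, j₀)) − A'^{(k₀)}(p, j') · Π_{l ≠ k₀} (Σ_r A'^{(l)}(r, j')·A^{(l)}(r, j₀)) ]. -/
open Finset

private lemma aux_sum_prod {d : ℕ} {I : Fin d → ℕ} (k₀ : Fin d) (p : Fin (I k₀))
    (B C : (k : Fin d) → Fin (I k) → ℝ) (c : ℝ) :
    ∑ i : (k : Fin d) → Fin (I k),
      (∏ k, B k (i k)) * (if i k₀ = p then c * ∏ l ∈ univ.erase k₀, C l (i l) else 0)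
    = c * (B k₀ p * ∏ l ∈ univ.erase k₀, ∑ r : Fin (I l), B l r * C l r) := by
  classical
  set G : (k : Fin d) → Fin (I k) → ℝ :=
    Function.update (fun k r => B k r * C k r) k₀ (fun r => if r = p then c * B k₀ p else 0)
    with hG
  have h1 : ∀ i : (k : Fin d) → Fin (I k),
      (∏ k, B k (i k)) * (if i k₀ = p then c * ∏ l ∈ univ.erase k₀, C l (i l) else 0)
      = ∏ k, G k (i k) := by
    intro i
    rw [← Finset.mul_prod_erase univ (fun k => G k (i k)) (Finset.mem_univ k₀),
        ← Finset.mul_prod_erase univ (fun k => B k (i k)) (Finset.mem_univ k₀)]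
    have hG0 : G k₀ (i k₀) = if i k₀ = p then c * B k₀ p else 0 := by
      simp [hG]
    have hGk : ∀ k ∈ univ.erase k₀, G k (i k) = B k (i k) * C k (i k) := by
      intro k hk
      simp [hG, Function.update_of_ne (Finset.ne_of_mem_erase hk)]
    rw [Finset.prod_congr rfl hGk, hG0]
    by_cases hp : i k₀ = p
    · simp only [hp, eq_self_iff_true, if_true, Finset.prod_mul_distrib]
      ring
    · simp [hp]
  rw [Finset.sum_congr rfl fun i _ => h1 i]
  have h2 : ∑ i : (k : Fin d) → Fin (I k), ∏ k, G k (i k)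
      = ∏ k, ∑ r : Fin (I k), G k r := by
    rw [Finset.prod_univ_sum]
    rw [Fintype.piFinset_univ]
  rw [h2, ← Finset.mul_prod_erase univ (fun k => ∑ r : Fin (I k), G k r) (Finset.mem_univ k₀)]
  have h3 : ∑ r : Fin (I k₀), G k₀ r = c * B k₀ p := by
    simp [hG, Finset.sum_ite_eq']
  have h4 : ∀ l ∈ univ.erase k₀, (∑ r : Fin (I l), G l r) = ∑ r : Fin (I l), B l r * C l r := by
    intro l hl
    refine Finset.sum_congr rfl fun r _ => ?_
    simp [hG, Function.update_of_ne (Finset.ne_of_mem_erase hl)]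
  rw [h3, Finset.prod_congr rfl h4]
  ring

/-- Entrywise gradient of the streaming history regularization term
`(1/2)‖M' − M(a)‖_F²` with respect to the entry `A k₀ p j₀` of the current
factor matrix (the old factors `A'` held fixed). -/
theorem history_term_hasDerivAt_factor_entry
    (d R : ℕ) (hd : 0 < d) (hR : 0 < R) (I : Fin d → ℕ)
    (s : Fin R → ℝ)
    (A A' : (k : Fin d) → Fin (I k) → Fin R → ℝ)
    (k₀ : Fin d) (p : Fin (I k₀)) (j₀ : Fin R) :
    HasDerivAt
      (fun a : ℝ => (1 / 2 : ℝ) * ∑ i : (k : Fin d) → Fin (I k),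
        ((∑ j : Fin R, s j * ∏ k : Fin d, A' k (i k) j)
          - (∑ j : Fin R, s j *
              ∏ k : Fin d,
                Function.update A k₀
                  (Function.update (A k₀) p (Function.update (A k₀ p) j₀ a)) k (i k) j)) ^ 2)
      (∑ j' : Fin R, s j₀ * s j' *
        (A k₀ p j' * (∏ l ∈ Finset.univ.erase k₀, ∑ r : Fin (I l), A l r j' * A l r j₀)
          - A' k₀ p j' * (∏ l ∈ Finset.univ.erase k₀, ∑ r : Fin (I l), A' l r j' * A l r j₀)))
      (A k₀ p j₀) := by
  classical
  set a₀ : ℝ := A k₀ p j₀ with ha₀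
  -- abbreviations
  set P : ((k : Fin d) → Fin (I k)) → Fin R → ℝ :=
    fun i j => ∏ k ∈ univ.erase k₀, A k (i k) j with hP
  set M' : ((k : Fin d) → Fin (I k)) → ℝ :=
    fun i => ∑ j : Fin R, s j * ∏ k : Fin d, A' k (i k) j with hM'
  set M : ((k : Fin d) → Fin (I k)) → ℝ :=
    fun i => ∑ j : Fin R, s j * (A k₀ (i k₀) j * P i j) with hM
  set E : ((k : Fin d) → Fin (I k)) → ℝ :=
    fun i => if i k₀ = p then s j₀ * P i j₀ else 0 with hE
  -- rewrite the product with updates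
  have key : ∀ (a : ℝ) (i : (k : Fin d) → Fin (I k)) (j : Fin R),
      (∏ k : Fin d,
        Function.update A k₀
          (Function.update (A k₀) p (Function.update (A k₀ p) j₀ a)) k (i k) j)
      = (if i k₀ = p ∧ j = j₀ then a else A k₀ (i k₀) j) * P i j := by
    intro a i j
    rw [← Finset.mul_prod_erase univ _ (Finset.mem_univ k₀)]
    congr 1
    · rw [Function.update_self]
      by_cases h1 : i k₀ = p <;> by_cases h2 : j = j₀ <;>
        simp [Function.update_apply, h1, h2]
    · exact Finset.prod_congr rfl fun k hk => by
        rw [Function.update_of_ne (Finset.ne_of_mem_erase hk)]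
  -- derivative of the inner model entry
  have hgi : ∀ i : (k : Fin d) → Fin (I k),
      HasDerivAt (fun a : ℝ =>
        ∑ j : Fin R, s j * ((if i k₀ = p ∧ j = j₀ then a else A k₀ (i k₀) j) * P i j))
        (E i) a₀ := by
    intro i
    have h := HasDerivAt.fun_sum (u := (univ : Finset (Fin R)))
      (A := fun j a => s j * ((if i k₀ = p ∧ j = j₀ then a else A k₀ (i k₀) j) * P i j))
      (A' := fun j => if i k₀ = p ∧ j = j₀ then s j * P i j else 0)
      (x := a₀) ?_
    · refine h.congr_deriv ?_
      by_cases hp : i k₀ = p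
      · simp [hE, hp, Finset.sum_ite_eq']
      · simp [hE, hp]
    · intro j _
      by_cases h : i k₀ = p ∧ j = j₀
      · simp only [if_pos h]
        simpa [mul_comm, mul_assoc, mul_left_comm] using
          ((hasDerivAt_id a₀).mul_const (P i j)).const_mul (s j)
      · simp only [if_neg h]
        exact hasDerivAt_const _ _
  -- derivative of the whole function
  have hder : HasDerivAt (fun a : ℝ => (1 / 2 : ℝ) * ∑ i : (k : Fin d) → Fin (I k),
      (M' i - ∑ j : Fin R, s j * ((if i k₀ = p ∧ j = j₀ then a else A k₀ (i k₀) j) * P i j)) ^ 2)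
      ((1 / 2 : ℝ) * ∑ i : (k : Fin d) → Fin (I k),
        ((2 : ℕ) * (M' i - M i) ^ 1 * (0 - E i))) a₀ := by
    refine HasDerivAt.const_mul _ (HasDerivAt.fun_sum fun i _ => ?_)
    have h := ((hasDerivAt_const a₀ (M' i)).fun_sub (hgi i)).fun_pow 2
    have hval : (∑ j : Fin R, s j * ((if i k₀ = p ∧ j = j₀ then a₀ else A k₀ (i k₀) j) * P i j))
        = M i := by
      refine Finset.sum_congr rfl fun j _ => ?_
      congr 2
      split_ifs with h'
      · rw [ha₀, h'.1, h'.2]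
      · rfl
    rw [hval] at h
    convert h using 1
  have heq : (∑ j' : Fin R, s j₀ * s j' *
        (A k₀ p j' * (∏ l ∈ Finset.univ.erase k₀, ∑ r : Fin (I l), A l r j' * A l r j₀)
          - A' k₀ p j' * (∏ l ∈ Finset.univ.erase k₀, ∑ r : Fin (I l), A' l r j' * A l r j₀)))
      = (1 / 2 : ℝ) * ∑ i : (k : Fin d) → Fin (I k),
        ((2 : ℕ) * (M' i - M i) ^ 1 * (0 - E i)) := by
    have step1 : (1 / 2 : ℝ) * ∑ i : (k : Fin d) → Fin (I k),
        ((2 : ℕ) * (M' i - M i) ^ 1 * (0 - E i))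
        = ∑ i : (k : Fin d) → Fin (I k), (M i - M' i) * E i := by
      rw [Finset.mul_sum]
      exact Finset.sum_congr rfl fun i _ => by push_cast; ring
    rw [step1]
    have expand : ∀ i : (k : Fin d) → Fin (I k), (M i - M' i) * E i
        = ∑ j' : Fin R,
            (s j' * ((∏ k : Fin d, A k (i k) j') * E i)
              - s j' * ((∏ k : Fin d, A' k (i k) j') * E i)) := by
      intro i
      have hMi : M i = ∑ j' : Fin R, s j' * ∏ k : Fin d, A k (i k) j' := by
        refine Finset.sum_congr rfl fun j _ => ?_
        rw [← Finset.mul_prod_erase univ (fun k => A k (i k) j) (Finset.mem_univ k₀)]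
      rw [hMi, hM', sub_mul, Finset.sum_mul, Finset.sum_mul, ← Finset.sum_sub_distrib]
      exact Finset.sum_congr rfl fun j' _ => by ring
    rw [Finset.sum_congr rfl fun i _ => expand i, Finset.sum_comm]
    refine Finset.sum_congr rfl fun j' _ => ?_
    rw [Finset.sum_sub_distrib]
    have hA : ∑ i : (k : Fin d) → Fin (I k), (∏ k : Fin d, A k (i k) j') * E i
        = s j₀ * (A k₀ p j' * ∏ l ∈ univ.erase k₀, ∑ r : Fin (I l), A l r j' * A l r j₀) :=
      aux_sum_prod k₀ p (fun k r => A k r j') (fun l r => A l r j₀) (s j₀)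
    have hA' : ∑ i : (k : Fin d) → Fin (I k), (∏ k : Fin d, A' k (i k) j') * E i
        = s j₀ * (A' k₀ p j' * ∏ l ∈ univ.erase k₀, ∑ r : Fin (I l), A' l r j' * A l r j₀) :=
      aux_sum_prod k₀ p (fun k r => A' k r j') (fun l r => A l r j₀) (s j₀)
    rw [← Finset.mul_sum, ← Finset.mul_sum, hA, hA']
    ring
  rw [heq]
  have := hder
  simp only [key] at this ⊢
  exact this
end

section
/- Let d, R be positive integers, I : Fin d → ℕ, weights s : Fin R → ℝ, factor matrices A : (k : Fin d) → Fin (I k) → Fin R → ℝ, and a data tensor x : (Π_k Fin (I k)) → ℝ. Fix a mode k₀, row p ∈ Fin (I k₀), and column j₀ ∈ Fin R. Then the map ℝ → ℝ sending a to (1/2) · Σ_{i ∈ Π_k Fin (I k)} (x_i − m_i(a))², where m(a) is the Kruskal model with the (p, j₀) entry of A^{(k₀)} replaced by a, is differentiable at a = A^{(k₀)}(p, j₀) with derivative Σ_{j' ∈ Fin R} s_{j'} · A^{(k₀)}(p, j') · s_{j₀} · Π_{l ≠ k₀} (Σ_r A^{(l)}(r, j')·A^{(l)}(r, j₀)) −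 Σ_{i : i_{k₀} = p} x_i · s_{j₀} · Π_{l ≠ k₀} A^{(l)}(i_l, j₀). -/
open Finset

lemma key_sum_prod {d : ℕ} {I : Fin d → ℕ} (k₀ : Fin d) (p : Fin (I k₀))
    (f : (l : Fin d) → Fin (I l) → ℝ) :
    ∑ i ∈ Finset.univ.filter (fun i : (k : Fin d) → Fin (I k) => i k₀ = p),
        ∏ l ∈ Finset.univ.erase k₀, f l (i l)
      = ∏ l ∈ Finset.univ.erase k₀, ∑ r : Fin (I l), f l r := by
  classical
  set F : (l : Fin d) → Fin (I l) → ℝ :=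
    Function.update f k₀ (fun r => if r = p then 1 else 0) with hF
  have h1 : ∏ l : Fin d, ∑ r : Fin (I l), F l r
      = ∏ l ∈ Finset.univ.erase k₀, ∑ r : Fin (I l), f l r := by
    rw [← Finset.mul_prod_erase Finset.univ _ (Finset.mem_univ k₀)]
    have : ∑ r : Fin (I k₀), F k₀ r = 1 := by
      simp [hF, Function.update_self]
    rw [this, one_mul]
    refine Finset.prod_congr rfl fun l hl => ?_
    have : F l = f l := Function.update_of_ne (Finset.ne_of_mem_erase hl) _ _
    rw [this]
  have h2 : ∏ l : Fin d, ∑ r : Fin (I l), F l r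
      = ∑ i : (k : Fin d) → Fin (I k), ∏ l : Fin d, F l (i l) :=
    Fintype.prod_sum F
  rw [← h1, h2]
  rw [Finset.sum_filter]
  refine Finset.sum_congr rfl fun i _ => ?_
  rw [← Finset.mul_prod_erase Finset.univ (fun l => F l (i l)) (Finset.mem_univ k₀)]
  have hFk₀ : F k₀ (i k₀) = if i k₀ = p then 1 else 0 := by
    simp [hF, Function.update_self]
  have hrest : ∏ l ∈ Finset.univ.erase k₀, F l (i l)
      = ∏ l ∈ Finset.univ.erase k₀, f l (i l) := by
    refine Finset.prod_congr rfl fun l hl => ?_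
    rw [hF, Function.update_of_ne (Finset.ne_of_mem_erase hl)]
  rw [hFk₀, hrest]
  by_cases h : i k₀ = p <;> simp [h]

/-- Entrywise gradient of the Gaussian loss `(1/2)‖X − M(a)‖_F²` with respect to
the factor matrix entry `A k₀ p j₀`: it splits into a Gram-matrix term plus a
term involving the data tensor. -/
theorem gaussian_loss_hasDerivAt_factor_entry
    (d R : ℕ) (hd : 0 < d) (hR : 0 < R) (I : Fin d → ℕ)
    (s : Fin R → ℝ)
    (A : (k : Fin d) → Fin (I k) → Fin R → ℝ)
    (x : ((k : Fin d) → Fin (I k)) → ℝ)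
    (k₀ : Fin d) (p : Fin (I k₀)) (j₀ : Fin R) :
    HasDerivAt
      (fun a : ℝ => (1 / 2 : ℝ) * ∑ i : (k : Fin d) → Fin (I k),
        (x i - ∑ j : Fin R, s j *
          ∏ k : Fin d,
            Function.update A k₀
              (Function.update (A k₀) p (Function.update (A k₀ p) j₀ a)) k (i k) j) ^ 2)
      ((∑ j' : Fin R, s j' * A k₀ p j' * s j₀ *
          ∏ l ∈ Finset.univ.erase k₀, ∑ r : Fin (I l), A l r j' * A l r j₀)
        - ∑ i ∈ Finset.univ.filter (fun i : (k : Fin d) → Fin (I k) => i k₀ = p),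
            x i * s j₀ * ∏ l ∈ Finset.univ.erase k₀, A l (i l) j₀)
      (A k₀ p j₀) := by
  classical
  set a₀ : ℝ := A k₀ p j₀ with ha₀
  set m : ((k : Fin d) → Fin (I k)) → ℝ :=
    fun i => ∑ j : Fin R, s j * ∏ k : Fin d, A k (i k) j with hm
  set g : ((k : Fin d) → Fin (I k)) → ℝ :=
    fun i => if i k₀ = p then s j₀ * ∏ l ∈ Finset.univ.erase k₀, A l (i l) j₀ else 0
    with hg
  -- the model entry as affine function of a
  have model_eq : ∀ (a : ℝ) (i : (k : Fin d) → Fin (I k)),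
      (∑ j : Fin R, s j * ∏ k : Fin d,
        Function.update A k₀
          (Function.update (A k₀) p (Function.update (A k₀ p) j₀ a)) k (i k) j)
      = m i + g i * (a - a₀) := by
    intro a i
    by_cases h : i k₀ = p
    · have hprod : ∀ j : Fin R,
          ∏ k : Fin d, Function.update A k₀
            (Function.update (A k₀) p (Function.update (A k₀ p) j₀ a)) k (i k) j
          = (if j = j₀ then a else A k₀ p j) * ∏ l ∈ Finset.univ.erase k₀, A l (i l) j := by
        intro j
        rw [← Finset.mul_prod_erase Finset.univ _ (Finset.mem_univ k₀)]
        congr 1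
        · rw [Function.update_self, h, Function.update_self]
          by_cases hj : j = j₀
          · subst hj; simp
          · simp [Function.update_of_ne hj, hj]
        · refine Finset.prod_congr rfl fun l hl => ?_
          rw [Function.update_of_ne (Finset.ne_of_mem_erase hl)]
      have hprodA : ∀ j : Fin R,
          ∏ k : Fin d, A k (i k) j = A k₀ p j * ∏ l ∈ Finset.univ.erase k₀, A l (i l) j := by
        intro j
        rw [← Finset.mul_prod_erase Finset.univ _ (Finset.mem_univ k₀), h]
      have hgi : g i = s j₀ * ∏ l ∈ Finset.univ.erase k₀, A l (i l) j₀ := by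
        simp [hg, h]
      rw [hm]
      simp only [hprod, hprodA, hgi]
      rw [Fintype.sum_eq_sum_compl_add j₀, Fintype.sum_eq_sum_compl_add j₀]
      have hc : ∑ j ∈ {j₀}ᶜ, s j * ((if j = j₀ then a else A k₀ p j) *
            ∏ l ∈ Finset.univ.erase k₀, A l (i l) j)
          = ∑ j ∈ {j₀}ᶜ, s j * (A k₀ p j * ∏ l ∈ Finset.univ.erase k₀, A l (i l) j) := by
        refine Finset.sum_congr rfl fun j hj => ?_
        have : j ≠ j₀ := by simpa using hj
        simp [this]
      rw [hc]
      simp only [if_pos rfl, if_true]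
      rw [ha₀]
      ring
    · have hgi : g i = 0 := by simp [hg, h]
      have hprod : ∀ j : Fin R,
          ∏ k : Fin d, Function.update A k₀
            (Function.update (A k₀) p (Function.update (A k₀ p) j₀ a)) k (i k) j
          = ∏ k : Fin d, A k (i k) j := by
        intro j
        refine Finset.prod_congr rfl fun k _ => ?_
        by_cases hk : k = k₀
        · subst hk
          rw [Function.update_self, Function.update_of_ne h]
        · rw [Function.update_of_ne hk]
      rw [hgi, hm]
      simp only [hprod]
      ring
  -- derivative
  have hderiv : HasDerivAt
      (fun a : ℝ => (1 / 2 : ℝ) * ∑ i : (k : Fin d) → Fin (I k),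
        (x i - (m i + g i * (a - a₀))) ^ 2)
      (∑ i : (k : Fin d) → Fin (I k), (m i - x i) * g i) a₀ := by
    have h1 : ∀ i : (k : Fin d) → Fin (I k),
        HasDerivAt (fun a : ℝ => (x i - (m i + g i * (a - a₀))) ^ 2)
          (2 * (x i - m i) ^ 1 * (-(g i))) a₀ := by
      intro i
      have hinner : HasDerivAt (fun a : ℝ => x i - (m i + g i * (a - a₀))) (-(g i)) a₀ := by
        have : HasDerivAt (fun a : ℝ => a - a₀) 1 a₀ := (hasDerivAt_id a₀).sub_const a₀
        have h2 := (this.const_mul (g i)).const_add (m i)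
        have h3 := (h2.const_sub (x i))
        simpa using h3
      simpa using hinner.fun_pow 2
    have hsum := HasDerivAt.fun_sum (u := Finset.univ) (fun i _ => h1 i)
    have := hsum.const_mul (1 / 2 : ℝ)
    refine this.congr_deriv ?_
    rw [Finset.mul_sum]
    refine Finset.sum_congr rfl fun i _ => ?_
    ring
  have hfun : (fun a : ℝ => (1 / 2 : ℝ) * ∑ i : (k : Fin d) → Fin (I k),
        (x i - ∑ j : Fin R, s j *
          ∏ k : Fin d,
            Function.update A k₀
              (Function.update (A k₀) p (Function.update (A k₀ p) j₀ a)) k (i k) j) ^ 2)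
      = (fun a : ℝ => (1 / 2 : ℝ) * ∑ i : (k : Fin d) → Fin (I k),
        (x i - (m i + g i * (a - a₀))) ^ 2) := by
    funext a
    congr 1
    refine Finset.sum_congr rfl fun i _ => ?_
    rw [model_eq a i]
  rw [hfun]
  -- identify the derivative value
  convert hderiv using 1
  rw [eq_comm]
  have hsplit : ∑ i : (k : Fin d) → Fin (I k), (m i - x i) * g i
      = (∑ i : (k : Fin d) → Fin (I k), m i * g i)
        - ∑ i : (k : Fin d) → Fin (I k), x i * g i := by
    rw [← Finset.sum_sub_distrib]
    refine Finset.sum_congr rfl fun i _ => ?_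
    ring
  rw [hsplit]
  congr 1
  · -- Gram term
    have h1 : ∑ i : (k : Fin d) → Fin (I k), m i * g i
        = ∑ i ∈ Finset.univ.filter (fun i : (k : Fin d) → Fin (I k) => i k₀ = p),
            m i * (s j₀ * ∏ l ∈ Finset.univ.erase k₀, A l (i l) j₀) := by
      rw [Finset.sum_filter]
      refine Finset.sum_congr rfl fun i _ => ?_
      by_cases h : i k₀ = p <;> simp [hg, h]
    rw [h1]
    have h2 : ∀ i ∈ Finset.univ.filter (fun i : (k : Fin d) → Fin (I k) => i k₀ = p),
        m i * (s j₀ * ∏ l ∈ Finset.univ.erase k₀, A l (i l) j₀)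
        = ∑ j : Fin R, s j * A k₀ p j * s j₀ *
            ∏ l ∈ Finset.univ.erase k₀, (A l (i l) j * A l (i l) j₀) := by
      intro i hi
      have h : i k₀ = p := by simpa using hi
      rw [hm]
      simp only
      rw [Finset.sum_mul]
      refine Finset.sum_congr rfl fun j _ => ?_
      rw [← Finset.mul_prod_erase Finset.univ (fun k => A k (i k) j) (Finset.mem_univ k₀), h,
        Finset.prod_mul_distrib]
      ring
    rw [Finset.sum_congr rfl h2, Finset.sum_comm]
    refine Finset.sum_congr rfl fun j _ => ?_
    rw [← Finset.mul_sum, key_sum_prod k₀ p (fun l r => A l r j * A l r j₀)]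
  · -- data term
    rw [Finset.sum_filter]
    refine Finset.sum_congr rfl fun i _ => ?_
    by_cases h : i k₀ = p <;> simp [hg, h, mul_assoc]
end
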